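/- arXiv:2406.15841 — 2 statements merged into one kernel-verified Lean document; each statement's English description precedes it below -/
import Mathlib

section
/- Let D be the digraph on n = n1 + n2 + 2 vertices consisting of disjoint complete digraphs K*_{n1}, K*_{n2}, new vertices u, v, the arc (w', w) for fixed w' ∈ V(K*_{n1}), w ∈ V(K*_{n2}), all arcs from V(K*_{n2}) to {u,v} ∪ V(K*_{n1}), and all arcs from u and v to V(K*_{n1}). Then D is strong but not supereulerian. -/
/-- A digraph: loopless, no parallel arcs (arcs given by a relation). -/
structure Digr (V : Type) where
  Adj : V → V → Prop
  loopless : ∀ v, ¬ Adj v v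

namespace Digr

variable {V : Type}

/-- The list of arcs (consecutive pairs) of a walk given by its list of vertices. -/
def arcs (l : List V) : List (V × V) := l.zip l.tail

/-- The vertex set of a walk. -/
def verts (l : List V) : Set V := {v | v ∈ l}

/-- A directed trail: a nonempty walk repeating no arc. -/
def IsDitrail (D : Digr V) (l : List V) : Prop :=
  l ≠ [] ∧ l.Chain' D.Adj ∧ (arcs l).Nodup

/-- A closed directed trail. -/
def IsClosedDitrail (D : Digr V) (l : List V) : Prop :=
  D.IsDitrail l ∧ l.head? = l.getLast?

/-- A digraph is supereulerian if it has a spanning closed ditrail. -/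
def Supereulerian (D : Digr V) : Prop :=
  ∃ l : List V, D.IsClosedDitrail l ∧ ∀ v : V, v ∈ l

/-- Strong connectivity. -/
def Strong (D : Digr V) : Prop :=
  ∀ u v : V, Relation.ReflTransGen D.Adj u v

noncomputable def outDeg (D : Digr V) (v : V) : ℕ := {w | D.Adj v w}.ncard
noncomputable def inDeg (D : Digr V) (v : V) : ℕ := {w | D.Adj w v}.ncard
noncomputable def deg (D : Digr V) (v : V) : ℕ := D.inDeg v + D.outDeg v

noncomputable def outDegOn (D : Digr V) (S : Set V) (v : V) : ℕ := {w ∈ S | D.Adj v w}.ncard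
noncomputable def inDegOn (D : Digr V) (S : Set V) (v : V) : ℕ := {w ∈ S | D.Adj w v}.ncard
noncomputable def degOn (D : Digr V) (S : Set V) (v : V) : ℕ := D.inDegOn S v + D.outDegOn S v

def Nonadjacent (D : Digr V) (u v : V) : Prop := ¬ D.Adj u v ∧ ¬ D.Adj v u
def Dominated (D : Digr V) (u v : V) : Prop := ∃ w, D.Adj w u ∧ D.Adj w v
def Dominating (D : Digr V) (u v : V) : Prop := ∃ w, D.Adj u w ∧ D.Adj v w

/-- A semicomplete multipartite digraph: a biorientation of a complete
multipartite graph, i.e. two vertices are joined by an arc (in some direction)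
iff they lie in different parts of some partition. -/
def IsSemicompleteMultipartite (D : Digr V) : Prop :=
  ∃ (ι : Type) (part : V → ι), ∀ u v : V, (D.Adj u v ∨ D.Adj v u) ↔ part u ≠ part v

end Digr

/-- The digraph of Example 1: two complete digraphs $K^*_{n_1}, K^*_{n_2}$,
two extra vertices $u, v$ (encoded as \`.inr (.inr 0)\` and \`.inr (.inr 1)\`),
the arc $(w', w)$, all arcs from $K^*_{n_2}$ to $\{u,v\} ∪ K^*_{n_1}$, and all
arcs from $u$ and $v$ to $K^*_{n_1}$. -/
def exDigr (n1 n2 : ℕ) (w' : Fin n1) (w : Fin n2) :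
    Digr (Fin n1 ⊕ (Fin n2 ⊕ Fin 2)) where
  Adj a b :=
    match a, b with
    | .inl a, .inl b => a ≠ b                      -- inside K*_{n1}
    | .inl a, .inr (.inl b) => a = w' ∧ b = w      -- only the arc (w', w)
    | .inl _, .inr (.inr _) => False               -- no arcs K*_{n1} → {u,v}
    | .inr (.inl _), .inl _ => True                -- K*_{n2} → K*_{n1}
    | .inr (.inl a), .inr (.inl b) => a ≠ b        -- inside K*_{n2}
    | .inr (.inl _), .inr (.inr _) => True         -- K*_{n2} → {u,v}
    | .inr (.inr _), .inl _ => True                -- {u,v} → K*_{n1}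
    | .inr (.inr _), .inr (.inl _) => False
    | .inr (.inr _), .inr (.inr _) => False        -- no arcs between/at u,v
  loopless v := by rcases v with a | b | c <;> simp


section Aux

variable {V : Type}

lemma arcs_cons_cons (x y : V) (t : List V) :
    Digr.arcs (x :: y :: t) = (x, y) :: Digr.arcs (y :: t) := rfl

lemma mem_arcs_adj (D : Digr V) :
    ∀ l : List V, l.Chain' D.Adj → ∀ p ∈ Digr.arcs l, D.Adj p.1 p.2
  | [], _, p, hp => by simp [Digr.arcs] at hp
  | [_], _, p, hp => by simp [Digr.arcs] at hp
  | x :: y :: t, h, p, hp => by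
      rw [arcs_cons_cons] at hp
      rcases List.mem_cons.1 hp with rfl | hp
      · exact (List.isChain_cons_cons.1 h).1
      · exact mem_arcs_adj D (y :: t) (List.isChain_cons_cons.1 h).2 p hp

set_option linter.unnecessarySeqFocus false in
lemma cross_count (g : V → Bool) :
    ∀ (t : List V) (x : V),
      ((Digr.arcs (x :: t)).countP (fun p => g p.1 && !g p.2)
          + (if g ((x :: t).getLast (List.cons_ne_nil _ _)) then 1 else 0))
        = ((Digr.arcs (x :: t)).countP (fun p => !g p.1 && g p.2)
          + (if g x then 1 else 0))
  | [], x => by simp [Digr.arcs]; split_ifs <;> simp_all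
  | y :: t, x => by
      have ih := cross_count g t y
      rw [arcs_cons_cons, List.countP_cons, List.countP_cons,
        List.getLast_cons (List.cons_ne_nil _ _)]
      rcases hx : g x <;> rcases hy : g y <;>
        simp only [hx, hy] at ih ⊢ <;>
        simp only [Bool.not_true, Bool.not_false, Bool.and_self, Bool.true_and,
          Bool.false_and, Bool.and_true, Bool.and_false, if_true, if_false,
          Bool.false_eq_true, Bool.true_eq_false, decide_false, decide_true,
          cond_true, cond_false, ite_true, ite_false, eq_self_iff_true] at ih ⊢ <;>
        try simp only [Nat.add_zero] <;>
        omega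

lemma exists_pred : ∀ (l : List V) (v : V), v ∈ l →
    l.head? = some v ∨ ∃ p ∈ Digr.arcs l, p.2 = v
  | [], v, hv => by simp at hv
  | x :: t, v, hv => by
      rcases List.mem_cons.1 hv with rfl | hv
      · exact Or.inl rfl
      · match t with
        | [] => simp at hv
        | y :: t' =>
          right
          rcases exists_pred (y :: t') v hv with h | ⟨p, hp, hp2⟩
          · exact ⟨(x, y), by simp [arcs_cons_cons], by simpa using h⟩
          · exact ⟨p, by rw [arcs_cons_cons]; exact List.mem_cons_of_mem _ hp, hp2⟩

lemma exists_pred_last : ∀ (x y : V) (t : List V),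
    ∃ p ∈ Digr.arcs (x :: y :: t), p.2 = (x :: y :: t).getLast (List.cons_ne_nil _ _)
  | x, y, [] => ⟨(x, y), by simp [Digr.arcs], rfl⟩
  | x, y, z :: t => by
      obtain ⟨p, hp, hp2⟩ := exists_pred_last y z t
      exact ⟨p, by rw [arcs_cons_cons]; exact List.mem_cons_of_mem _ hp,
        by rw [List.getLast_cons (List.cons_ne_nil _ _)]; exact hp2⟩

lemma nodup_all_eq_length_le {α : Type*} (l : List α) (a : α) (h : l.Nodup)
    (he : ∀ x ∈ l, x = a) : l.length ≤ 1 := by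
  match l with
  | [] => simp
  | [_] => simp
  | x :: y :: t =>
    exfalso
    have hx := he x (by simp)
    have hy := he y (by simp)
    exact (List.nodup_cons.1 h).1 (by rw [hx, ← hy]; simp)

lemma two_mem_length {α : Type*} {l : List α} {a b : α} (ha : a ∈ l) (hb : b ∈ l)
    (hab : a ≠ b) : 2 ≤ l.length := by
  match l with
  | [] => simp at ha
  | [x] => simp at ha hb; exact absurd (ha.trans hb.symm) hab
  | x :: y :: t => simp only [List.length_cons]; omega

end Aux

/-- The digraph of Example 1 is strong but not supereulerian. -/
theorem stmt10 (n1 n2 : ℕ) (w' : Fin n1) (w : Fin n2) :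
    (exDigr n1 n2 w' w).Strong ∧ ¬ (exDigr n1 n2 w' w).Supereulerian := by
  constructor
  · -- Strong
    set D := exDigr n1 n2 w' w
    have h1 : ∀ x, Relation.ReflTransGen D.Adj x (Sum.inr (Sum.inl w)) := by
      rintro (a | b | c)
      · by_cases ha : a = w'
        · exact Relation.ReflTransGen.single (show D.Adj (Sum.inl a) (Sum.inr (Sum.inl w)) from ⟨ha, rfl⟩)
        · exact Relation.ReflTransGen.head (show D.Adj (Sum.inl a) (Sum.inl w') from ha)
            (Relation.ReflTransGen.single (show D.Adj (Sum.inl w') (Sum.inr (Sum.inl w)) from ⟨rfl, rfl⟩))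
      · by_cases hb : b = w
        · rw [hb]
        · exact Relation.ReflTransGen.single (show D.Adj (Sum.inr (Sum.inl b)) (Sum.inr (Sum.inl w)) from hb)
      · exact Relation.ReflTransGen.head
          (show D.Adj (Sum.inr (Sum.inr c)) (Sum.inl w') from trivial)
          (Relation.ReflTransGen.single (show D.Adj (Sum.inl w') (Sum.inr (Sum.inl w)) from ⟨rfl, rfl⟩))
    have h2 : ∀ y, Relation.ReflTransGen D.Adj (Sum.inr (Sum.inl w)) y := by
      rintro (a | b | c)
      · exact Relation.ReflTransGen.single (show D.Adj (Sum.inr (Sum.inl w)) (Sum.inl a) from trivial)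
      · by_cases hb : b = w
        · rw [hb]
        · exact Relation.ReflTransGen.single
            (show D.Adj (Sum.inr (Sum.inl w)) (Sum.inr (Sum.inl b)) from fun h => hb h.symm)
      · exact Relation.ReflTransGen.single (show D.Adj (Sum.inr (Sum.inl w)) (Sum.inr (Sum.inr c)) from trivial)
    exact fun x y => (h1 x).trans (h2 y)
  · -- not supereulerian
    rintro ⟨l, ⟨⟨hne, hch, hnd⟩, hclosed⟩, hsp⟩
    set D := exDigr n1 n2 w' w with hD
    set g : (Fin n1 ⊕ (Fin n2 ⊕ Fin 2)) → Bool :=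
      fun x => match x with | Sum.inr (Sum.inl _) => true | _ => false with hg
    obtain ⟨x, t, rfl⟩ := List.exists_cons_of_ne_nil hne
    have hxl : x = (x :: t).getLast (List.cons_ne_nil _ _) := by
      have h := hclosed
      rw [List.head?_cons, List.getLast?_eq_getLast (List.cons_ne_nil _ _)] at h
      exact Option.some.inj h
    have hcross := cross_count g t x
    have hgx : (if g ((x :: t).getLast (List.cons_ne_nil _ _)) then 1 else 0)
        = (if g x then 1 else 0) := by rw [← hxl]
    rw [hgx] at hcross
    have hEq : (Digr.arcs (x :: t)).countP (fun p => g p.1 && !g p.2)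
        = (Digr.arcs (x :: t)).countP (fun p => !g p.1 && g p.2) := by omega
    -- arcs entering S := V(K*_{n2}) are all equal to (w', w)
    have hin : ∀ p ∈ (Digr.arcs (x :: t)).filter (fun p => !g p.1 && g p.2),
        p = (Sum.inl w', Sum.inr (Sum.inl w)) := by
      intro p hp
      obtain ⟨hpm, hpg⟩ := List.mem_filter.1 hp
      have hadj := mem_arcs_adj D _ hch p hpm
      obtain ⟨p1, p2⟩ := p
      rcases p1 with a | b | c <;> rcases p2 with a' | b' | c' <;> simp [hg] at hpg
      · obtain ⟨rfl, rfl⟩ := hadj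
        rfl
      · exact hadj.elim
    have hle : (Digr.arcs (x :: t)).countP (fun p => !g p.1 && g p.2) ≤ 1 := by
      rw [List.countP_eq_length_filter]
      exact nodup_all_eq_length_le _ _ (hnd.filter _) hin
    -- every vertex u, v has an in-arc on the trail
    have hpred : ∀ c : Fin 2, ∃ p ∈ Digr.arcs (x :: t),
        p.2 = Sum.inr (Sum.inr c) := by
      intro c
      rcases exists_pred (x :: t) (Sum.inr (Sum.inr c)) (hsp _) with h | h
      · rw [List.head?_cons] at h
        have hx : x = Sum.inr (Sum.inr c) := Option.some.inj h
        rcases t with _ | ⟨y, t'⟩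
        · exfalso
          have h2 := hsp (Sum.inl w')
          rw [hx] at h2
          simp at h2
        · obtain ⟨p, hp, hp2⟩ := exists_pred_last x y t'
          refine ⟨p, hp, ?_⟩
          have hpx : p.2 = x := by rw [hxl]; exact hp2
          rw [hpx, hx]
      · exact h
    obtain ⟨pu, hpu, hpu2⟩ := hpred 0
    obtain ⟨pv, hpv, hpv2⟩ := hpred 1
    have hout : ∀ p ∈ Digr.arcs (x :: t), ∀ c : Fin 2,
        p.2 = Sum.inr (Sum.inr c) → (g p.1 && !g p.2) = true := by
      intro p hpm c hp2
      have hadj := mem_arcs_adj D _ hch p hpm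
      obtain ⟨p1, p2⟩ := p
      simp only at hp2
      subst hp2
      rcases p1 with a | b | c'
      · exact hadj.elim
      · simp [hg]
      · exact hadj.elim
    have hmemu : pu ∈ (Digr.arcs (x :: t)).filter (fun p => g p.1 && !g p.2) :=
      List.mem_filter.2 ⟨hpu, hout pu hpu 0 hpu2⟩
    have hmemv : pv ∈ (Digr.arcs (x :: t)).filter (fun p => g p.1 && !g p.2) :=
      List.mem_filter.2 ⟨hpv, hout pv hpv 1 hpv2⟩
    have hne' : pu ≠ pv := by
      intro h
      rw [h, hpv2] at hpu2
      simp at hpu2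
    have hge : 2 ≤ (Digr.arcs (x :: t)).countP (fun p => g p.1 && !g p.2) := by
      rw [List.countP_eq_length_filter]
      exact two_mem_length hmemu hmemv hne'
    omega
end

section
/- Let D be a nonsupereulerian strong semicomplete multipartite digraph and let S, T, P, W be as in the standard maximal closed ditrail setup (S a maximum-order closed ditrail, T = y_0 x_1 ⋯ x_t y_{p+1} an (S,S)-dipath chosen with shortest S-segment P having internal vertex set W, and each x_i nonadjacent to each vertex of W). Then t = 1 and |W| = 1; i.e., T = y_0 x_1 y_2 and P = y_0 y_1 y_2. -/
namespace Digr
variable {V : Type}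

lemma arcs_cons_cons (a b : V) (l : List V) :
    arcs (a :: b :: l) = (a, b) :: arcs (b :: l) := rfl

lemma arcs_nil : arcs ([] : List V) = [] := rfl
lemma arcs_single (a : V) : arcs [a] = [] := rfl

lemma mem_of_mem_arcs {l : List V} {u v : V} (h : (u, v) ∈ arcs l) :
    u ∈ l ∧ v ∈ l := by
  obtain ⟨h1, h2⟩ := List.of_mem_zip h
  exact ⟨h1, List.mem_of_mem_tail h2⟩

lemma exists_split_of_mem_arcs {l : List V} {u v : V} (h : (u, v) ∈ arcs l) :
    ∃ A B, l = A ++ u :: v :: B := by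
  induction l with
  | nil => simp [arcs] at h
  | cons a l ih =>
    cases l with
    | nil => simp [arcs] at h
    | cons b t =>
      rw [arcs_cons_cons, List.mem_cons] at h
      rcases h with h | h
      · obtain ⟨rfl, rfl⟩ := Prod.mk.injEq .. ▸ h
        exact ⟨[], t, by simp_all⟩
      · obtain ⟨A, B, hAB⟩ := ih h
        exact ⟨a :: A, B, by simp [hAB]⟩

lemma arcs_nodup_of_nodup {l : List V} (h : l.Nodup) : (arcs l).Nodup := by
  induction l with
  | nil => simp [arcs]
  | cons a l ih =>
    cases l with
    | nil => simp [arcs]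
    | cons b t =>
      rw [arcs_cons_cons]
      refine List.nodup_cons.2 ⟨fun hmem => ?_, ih h.of_cons⟩
      exact (List.nodup_cons.1 h).1 (mem_of_mem_arcs hmem).1

lemma arcs_append_cons (l1 : List V) (x : V) (l2 : List V) :
    arcs (l1 ++ x :: l2) = arcs (l1 ++ [x]) ++ arcs (x :: l2) := by
  induction l1 with
  | nil => simp [arcs]
  | cons a l ih =>
    cases l with
    | nil => simp [arcs_cons_cons, arcs_single]
    | cons b t =>
      simp only [List.cons_append, arcs_cons_cons] at *
      rw [ih]

lemma arcs_mid {X : List V} (hX : X ≠ []) : ∀ (y0 yq u v : V),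
    (u, v) ∈ arcs (y0 :: (X ++ [yq])) → u ∈ X ∨ v ∈ X := by
  induction X with
  | nil => exact absurd rfl hX
  | cons x X' ih =>
    intro y0 yq u v h
    rw [List.cons_append, arcs_cons_cons, List.mem_cons] at h
    rcases h with h | h
    · obtain ⟨rfl, rfl⟩ := Prod.mk.injEq .. ▸ h
      simp
    · cases hX' : X' with
      | nil =>
        subst hX'
        simp only [List.nil_append] at h
        rw [arcs_cons_cons] at h
        simp only [arcs_single, List.mem_singleton] at h
        obtain ⟨rfl, rfl⟩ := Prod.mk.injEq .. ▸ h
        simp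
      | cons c t =>
        rcases ih (by simp [hX']) x yq u v (hX' ▸ h) with h' | h'
        · exact Or.inl (List.mem_cons_of_mem x (hX' ▸ h'))
        · exact Or.inr (List.mem_cons_of_mem x (hX' ▸ h'))

end Digr

namespace Digr
variable {V : Type}


lemma splice_contra (D : Digr V) (S : List V)
    (hS : D.IsClosedDitrail S)
    (hSmax : ∀ S' : List V, D.IsClosedDitrail S' →
      (verts S').ncard ≤ (verts S).ncard)
    (y0 yq : V) (X : List V) (hX : X ≠ [])
    (hTchain : (y0 :: (X ++ [yq])).Chain' D.Adj)
    (hTnodup : (y0 :: (X ++ [yq])).Nodup)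
    (hXoff : ∀ x ∈ X, x ∉ S)
    (harc : (y0, yq) ∈ arcs S) : False := by
  obtain ⟨⟨hne, hchain, hnd⟩, hcyc⟩ := hS
  obtain ⟨A, B, hAB⟩ := exists_split_of_mem_arcs harc
  set S' := A ++ y0 :: (X ++ yq :: B) with hS'
  have heqT : y0 :: (X ++ yq :: B) = (y0 :: (X ++ [yq])) ++ B := by simp
  have heqT2 : y0 :: (X ++ yq :: B) = (y0 :: X) ++ (yq :: B) := by simp
  have hdecS : arcs S = arcs (A ++ [y0]) ++ ((y0, yq) :: arcs (yq :: B)) := by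
    rw [hAB, arcs_append_cons, arcs_cons_cons]
  have hdecS' : arcs S' = arcs (A ++ [y0]) ++
      (arcs (y0 :: (X ++ [yq])) ++ arcs (yq :: B)) := by
    rw [hS', arcs_append_cons]
    congr 1
    rw [heqT2, arcs_append_cons]
    congr 1
  -- endpoints of S-side arcs lie in S
  have hend1 : ∀ p ∈ arcs (A ++ [y0]), (p : V × V).1 ∈ S ∧ p.2 ∈ S := by
    rintro ⟨u, v⟩ hp
    obtain ⟨h1, h2⟩ := mem_of_mem_arcs hp
    rw [hAB]
    refine ⟨?_, ?_⟩ <;>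
      simp only [List.mem_append, List.mem_cons, List.mem_singleton] at h1 h2 ⊢ <;> tauto
  have hend3 : ∀ p ∈ arcs (yq :: B), (p : V × V).1 ∈ S ∧ p.2 ∈ S := by
    rintro ⟨u, v⟩ hp
    obtain ⟨h1, h2⟩ := mem_of_mem_arcs hp
    rw [hAB]
    refine ⟨?_, ?_⟩ <;>
      simp only [List.mem_append, List.mem_cons, List.mem_singleton] at h1 h2 ⊢ <;> tauto
  have hdisjT : ∀ L : List (V × V), (∀ p ∈ L, (p : V × V).1 ∈ S ∧ p.2 ∈ S) →
      (arcs (y0 :: (X ++ [yq]))).Disjoint L := by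
    intro L hL p hpT hpL
    rcases arcs_mid hX y0 yq p.1 p.2 (by simpa using hpT) with hx | hx
    · exact hXoff p.1 hx (hL p hpL).1
    · exact hXoff p.2 hx (hL p hpL).2
  -- nodup
  rw [hdecS, List.nodup_append] at hnd
  obtain ⟨hnd1, hnd2, hdisj12⟩ := hnd
  have hnd3 : (arcs (yq :: B)).Nodup := (List.nodup_cons.1 hnd2).2
  have hndT : (arcs (y0 :: (X ++ [yq]))).Nodup := arcs_nodup_of_nodup hTnodup
  have hndS' : (arcs S').Nodup := by
    rw [hdecS', List.nodup_append]
    refine ⟨hnd1, ?_, ?_⟩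
    · rw [List.nodup_append]
      exact ⟨hndT, hnd3, fun a ha b hb hab => by subst hab; exact hdisjT _ hend3 ha hb⟩
    · intro p hp1 q hp2 hpq
      subst hpq
      rw [List.mem_append] at hp2
      rcases hp2 with hp2 | hp2
      · exact hdisjT _ hend1 hp2 hp1
      · exact hdisj12 p hp1 p (List.mem_cons_of_mem _ hp2) rfl
  -- chain
  rw [hAB] at hchain
  simp only [List.Chain'] at hchain
  rw [List.isChain_append] at hchain
  obtain ⟨hcA, hc2, hlink⟩ := hchain
  have hc2' : List.Chain' D.Adj (yq :: B) := hc2.tail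
  simp only [List.Chain'] at hc2'
  rw [List.isChain_cons] at hc2'
  have hchainS' : S'.Chain' D.Adj := by
    simp only [List.Chain']
    rw [hS', List.isChain_append]
    refine ⟨hcA, ?_, by simpa using hlink⟩
    rw [heqT, List.isChain_append]
    refine ⟨hTchain, hc2'.2, ?_⟩
    intro a ha b hb
    have hga : (y0 :: (X ++ [yq])).getLast? = some yq := by
      rw [show y0 :: (X ++ [yq]) = (y0 :: X) ++ [yq] by simp, List.getLast?_append]
      rfl
    rw [hga, Option.mem_some_iff] at ha
    subst ha
    exact hc2'.1 b hb
  -- head? and getLast?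
  obtain ⟨z, hz⟩ : ∃ z, (yq :: B).getLast? = some z :=
    ⟨_, List.getLast?_eq_getLast (by simp)⟩
  have hh : S'.head? = S.head? := by
    rw [hS', hAB, List.head?_append, List.head?_append]
    rfl
  have hlS : S.getLast? = some z := by
    rw [hAB, List.getLast?_append, show y0 :: yq :: B = [y0] ++ (yq :: B) by simp,
      List.getLast?_append, hz]
    rfl
  have hlS' : S'.getLast? = some z := by
    rw [hS', List.getLast?_append, heqT2, List.getLast?_append, hz]
    rfl
  have hcycS' : S'.head? = S'.getLast? := by rw [hh, hcyc, hlS, hlS']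
  have hneS' : S' ≠ [] := by simp [hS']
  -- verts
  obtain ⟨x1, hx1⟩ := List.exists_mem_of_ne_nil X hX
  have hsub : verts S ⊂ verts S' := by
    constructor
    · intro v hv
      simp only [verts, Set.mem_setOf_eq, hAB, hS', List.mem_append, List.mem_cons] at hv ⊢
      tauto
    · intro hcon
      have hx1S' : x1 ∈ verts S' := by
        simp only [verts, Set.mem_setOf_eq, hS', List.mem_append, List.mem_cons]
        tauto
      exact hXoff x1 hx1 (hcon hx1S')
  have hlt : (verts S).ncard < (verts S').ncard :=
    Set.ncard_lt_ncard hsub (List.finite_toSet S')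
  exact absurd (hSmax S' ⟨⟨hneS', hchainS', hndS'⟩, hcycS'⟩) (not_le.2 hlt)


end Digr

/-- In a nonsupereulerian strong semicomplete multipartite digraph, with the
standard setup (maximum-order closed ditrail $S$, $(S,S)$-dipath
$T = y_0 x_1 ⋯ x_t y_{p+1}$ with internal vertex list $X$ chosen so that the
$S$-segment $P$ is shortest, internal vertices of $P$ pairwise nonadjacent
to those of $T$), both $T$ and $P$ have exactly one internal vertex. -/
theorem stmt15 {V : Type} (D : Digr V) (S : List V)
    (hsm : D.IsSemicompleteMultipartite)
    (hstrong : D.Strong) (hnse : ¬ D.Supereulerian)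
    (hS : D.IsClosedDitrail S)
    (hSmax : ∀ S' : List V, D.IsClosedDitrail S' →
      (Digr.verts S').ncard ≤ (Digr.verts S).ncard)
    (y0 yq : V) (X : List V) (P : List V)
    (hX : X ≠ [])
    (hTchain : (y0 :: (X ++ [yq])).Chain' D.Adj)
    (hTnodup : (y0 :: (X ++ [yq])).Nodup)
    (hy0 : y0 ∈ S) (hyq : yq ∈ S) (hXoff : ∀ x ∈ X, x ∉ S)
    (hP : D.IsDitrail P) (hPsub : ∀ a ∈ Digr.arcs P, a ∈ Digr.arcs S)
    (hPh : P.head? = some y0) (hPl : P.getLast? = some yq)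
    (hmin : ∀ (y0' yq' : V) (X' P' : List V), X' ≠ [] →
      (y0' :: (X' ++ [yq'])).Chain' D.Adj → (y0' :: (X' ++ [yq'])).Nodup →
      y0' ∈ S → yq' ∈ S → (∀ x ∈ X', x ∉ S) →
      D.IsDitrail P' → (∀ a ∈ Digr.arcs P', a ∈ Digr.arcs S) →
      P'.head? = some y0' → P'.getLast? = some yq' →
      (Digr.arcs P).length ≤ (Digr.arcs P').length)
    (hnonadj : ∀ x ∈ X, ∀ y ∈ P.dropLast.tail, D.Nonadjacent x y) :
    X.length = 1 ∧ P.dropLast.tail.length = 1 := by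
  obtain ⟨ι, part, hpart⟩ := hsm
  have hsame : ∀ u v : V, D.Nonadjacent u v → part u = part v := by
    intro u v h
    by_contra hne
    rcases (hpart u v).2 hne with h' | h'
    · exact h.1 h'
    · exact h.2 h'
  obtain ⟨hPne, hPchain, hPnd⟩ := hP
  match P, hPne with
  | [a], _ =>
    simp only [List.head?_cons, Option.some.injEq] at hPh
    simp only [List.getLast?_singleton, Option.some.injEq] at hPl
    exfalso
    have : y0 ≠ yq := by
      have h := List.nodup_cons.1 hTnodup
      intro he
      exact h.1 (by simp [he])
    exact this (hPh.symm.trans hPl)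
  | [a, b], _ =>
    exfalso
    simp only [List.head?_cons, Option.some.injEq] at hPh
    have hb : b = yq := by
      simpa using hPl
    have harc : (a, b) ∈ Digr.arcs S := hPsub _ (by simp [Digr.arcs])
    rw [hPh, hb] at harc
    exact Digr.splice_contra D S hS hSmax y0 yq X hX hTchain hTnodup hXoff harc
  | a :: b :: c :: t, _ =>
    have hW : (a :: b :: c :: t).dropLast.tail = b :: (c :: t).dropLast := by
      simp
    obtain ⟨x1, X', rfl⟩ : ∃ x1 X', X = x1 :: X' := by
      cases X with
      | nil => exact absurd rfl hX
      | cons x1 X' => exact ⟨x1, X', rfl⟩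
    have hb : part x1 = part b :=
      hsame _ _ (hnonadj x1 (by simp) b (by rw [hW]; simp))
    constructor
    · cases X' with
      | nil => rfl
      | cons x2 X'' =>
        exfalso
        have hadj : D.Adj x1 x2 := by
          have h := (List.isChain_cons_cons.1 hTchain).2
          have h' : List.IsChain D.Adj (x1 :: x2 :: (X'' ++ [yq])) := by simpa using h
          exact (List.isChain_cons_cons.1 h').1
        have h2 : part x2 = part b :=
          hsame _ _ (hnonadj x2 (by simp) b (by rw [hW]; simp))
        exact (hpart x1 x2).1 (Or.inl hadj) (hb.trans h2.symm)
    · rw [hW]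
      cases t with
      | nil => rfl
      | cons d t' =>
        exfalso
        have hadj : D.Adj b c := (List.isChain_cons_cons.1
          (List.isChain_cons_cons.1 hPchain).2).1
        have hc : part x1 = part c :=
          hsame _ _ (hnonadj x1 (by simp) c (by rw [hW]; simp))
        exact (hpart b c).1 (Or.inl hadj) (hb.symm.trans hc)
end
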